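/- arXiv:0706.2714 — 3 statements merged into one kernel-verified Lean document; each statement's English description precedes it below -/
import Mathlib

section
/- Let $J, K \subseteq S$ in $S_n$ with $x \in X_J^{-1} \cap X_K$. Let $\mathcal{J}_q$ and $\mathcal{K}_m$ denote the vertex sets of the connected components of the graphs of $J$ and $K$. If $i \in x^{-1}\mathcal{J}_q \cap \mathcal{K}_m$ and $j \in x^{-1}\mathcal{J}_{q'} \cap \mathcal{K}_m$ with $q < q'$ (where components are ordered by their least elements), then $i < j$. -/
open Equiv Pointwise

/-- The copy of `Sₙ` inside `Equiv.Perm ℕ`: permutations fixing every point `≥ n`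
(we use points `0,…,n-1` instead of `1,…,n`). -/
def symN (n : ℕ) : Subgroup (Equiv.Perm ℕ) where
  carrier := {x | ∀ i, n ≤ i → x i = i}
  one_mem' := fun _ _ => rfl
  mul_mem' := by
    intro a b ha hb i hi
    simp only [Set.mem_setOf_eq] at *
    simp [Equiv.Perm.mul_apply, hb i hi, ha i hi]
  inv_mem' := by
    intro a ha i hi
    simp only [Set.mem_setOf_eq] at *
    conv_lhs => rw [← ha i hi]
    simp

/-- The number of inversions (the Coxeter length in `Sₙ`). -/
def invNum (n : ℕ) (x : Equiv.Perm ℕ) : ℕ :=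
  ((Finset.range n ×ˢ Finset.range n).filter
    (fun p => p.1 < p.2 ∧ x p.2 < x p.1)).card

/-- The adjacent transpositions `(k, k+1)` for `k ∈ J`. -/
def gens (J : Set ℕ) : Set (Equiv.Perm ℕ) := (fun k => Equiv.swap k (k + 1)) '' J

/-- The parabolic subgroup `W_J`. -/
def parabolic (J : Set ℕ) : Subgroup (Equiv.Perm ℕ) := Subgroup.closure (gens J)

/-- `x ∈ X_J`: a minimal length left coset representative of `W_J` in `Sₙ`. -/
def isMinLeft (n : ℕ) (J : Set ℕ) (x : Equiv.Perm ℕ) : Prop :=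
  x ∈ symN n ∧ ∀ w ∈ parabolic J, invNum n x ≤ invNum n (x * w)

/-- `x ∈ X_J⁻¹`: a minimal length right coset representative of `W_J` in `Sₙ`. -/
def isMinRight (n : ℕ) (J : Set ℕ) (x : Equiv.Perm ℕ) : Prop :=
  x ∈ symN n ∧ ∀ w ∈ parabolic J, invNum n x ≤ invNum n (w * x)

/-- `i1` and `j1` lie in the same connected component of the graph `𝒥` with
edges `(k, k+1)` for `k ∈ J`. -/
def sameComp (J : Set ℕ) (i j : ℕ) : Prop :=
  ∀ t, min i j ≤ t → t < max i j → t ∈ J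

/-- The vertex set of the connected component of the graph of `J` containing `a`. -/
def comp (J : Set ℕ) (a : ℕ) : Set ℕ := {b | sameComp J a b}

/-- `c` is a composition of `n`. -/
def isComposition (n : ℕ) (c : List ℕ) : Prop := c.sum = n ∧ ∀ k ∈ c, 0 < k

/-- The `q`-th consecutive block determined by a composition `c`. -/
def blockSet (c : List ℕ) (q : ℕ) : Set ℕ := Set.Ico ((c.take q).sum) ((c.take (q + 1)).sum)

/-- The set of adjacent transpositions corresponding to a composition `c`:
those `(i, i+1)` with `i, i+1` in the same block. -/
def edgesOf (c : List ℕ) : Set ℕ := {i | ∃ q, i ∈ blockSet c q ∧ i + 1 ∈ blockSet c q}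

/-- `i` indexes an edge `(i, i+1)` of the image graph `x⁻¹𝒥`, i.e. `(x i, x (i+1))`
is an edge of `𝒥` (as an unordered pair). -/
def imgEdges (x : Equiv.Perm ℕ) (J : Set ℕ) : Set ℕ :=
  {i | ∃ t ∈ J, (x i = t ∧ x (i + 1) = t + 1) ∨ (x i = t + 1 ∧ x (i + 1) = t)}

private lemma swap_lt_aux {k a b : ℕ} (hab : a < b) (hne : ¬(a = k ∧ b = k + 1)) :
    Equiv.swap k (k + 1) a < Equiv.swap k (k + 1) b := by
  simp only [Equiv.swap_apply_def]
  split_ifs <;> omega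

private lemma invNum_swap_lt (n k : ℕ) (hk : k + 1 < n) (x : Equiv.Perm ℕ)
    (hdesc : x (k + 1) < x k) :
    invNum n (x * Equiv.swap k (k + 1)) < invNum n x := by
  classical
  set s := Equiv.swap k (k + 1) with hs
  unfold invNum
  set A := (Finset.range n ×ˢ Finset.range n).filter
    (fun p => p.1 < p.2 ∧ x p.2 < x p.1) with hA
  have hmem : ((k, k + 1) : ℕ × ℕ) ∈ A := by
    simp only [hA, Finset.mem_filter, Finset.mem_product, Finset.mem_range]
    exact ⟨⟨by omega, hk⟩, by omega, hdesc⟩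
  have hrange : ∀ a, a < n → s a < n := by
    intro a ha
    simp only [hs, Equiv.swap_apply_def]
    split_ifs <;> omega
  have hle : ((Finset.range n ×ˢ Finset.range n).filter
      (fun p => p.1 < p.2 ∧ (x * s) p.2 < (x * s) p.1)).card ≤
      (A.erase (k, k + 1)).card := by
    apply Finset.card_le_card_of_injOn (fun p => (s p.1, s p.2))
    · intro p hp
      replace hp : p ∈ (Finset.range n ×ˢ Finset.range n).filter
          (fun p => p.1 < p.2 ∧ (x * s) p.2 < (x * s) p.1) := hp
      obtain ⟨hpr, hab, hinv⟩ := Finset.mem_filter.mp hp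
      obtain ⟨h1, h2⟩ := Finset.mem_product.mp hpr
      rw [Finset.mem_range] at h1 h2
      simp only [Equiv.Perm.mul_apply] at hinv
      have hne : ¬(p.1 = k ∧ p.2 = k + 1) := by
        rintro ⟨e1, e2⟩
        rw [e1, e2] at hinv
        rw [hs, Equiv.swap_apply_left, Equiv.swap_apply_right] at hinv
        omega
      have hlt := swap_lt_aux hab hne
      refine Finset.mem_erase.mpr ⟨?_, ?_⟩
      · intro h
        have e1 : s p.1 = k := congrArg Prod.fst h
        have e2 : s p.2 = k + 1 := congrArg Prod.snd h
        have f1 : p.1 = s k := by rw [← e1, hs, Equiv.swap_apply_self]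
        have f2 : p.2 = s (k + 1) := by rw [← e2, hs, Equiv.swap_apply_self]
        rw [hs, Equiv.swap_apply_left] at f1
        rw [hs, Equiv.swap_apply_right] at f2
        omega
      · simp only [hA, Finset.mem_filter, Finset.mem_product, Finset.mem_range]
        exact ⟨⟨hrange _ h1, hrange _ h2⟩, hlt, hinv⟩
    · intro p _ q _ h
      have e1 : s p.1 = s q.1 := congrArg Prod.fst h
      have e2 : s p.2 = s q.2 := congrArg Prod.snd h
      exact Prod.ext (s.injective e1) (s.injective e2)
  have hcard : (A.erase (k, k + 1)).card < A.card :=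
    Finset.card_erase_lt_of_mem hmem
  omega

private lemma ascent_of_minLeft (n : ℕ) (K : Set ℕ) (hK : ∀ k ∈ K, k + 1 < n)
    (x : Equiv.Perm ℕ) (hx : isMinLeft n K x) (k : ℕ) (hkK : k ∈ K) :
    x k < x (k + 1) := by
  rcases lt_trichotomy (x k) (x (k + 1)) with h | h | h
  · exact h
  · exact absurd (x.injective h) (by omega)
  · exfalso
    have hmem : Equiv.swap k (k + 1) ∈ parabolic K :=
      Subgroup.subset_closure ⟨k, hkK, rfl⟩
    have h1 := hx.2 _ hmem
    have h2 := invNum_swap_lt n k (hK k hkK) x h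
    omega

private lemma chain_lt (n : ℕ) (K : Set ℕ) (hK : ∀ k ∈ K, k + 1 < n)
    (x : Equiv.Perm ℕ) (hx : isMinLeft n K x) :
    ∀ (m j : ℕ), (∀ t, j ≤ t → t < j + m + 1 → t ∈ K) → x j < x (j + m + 1) := by
  intro m
  induction m with
  | zero =>
    intro j h
    simpa using ascent_of_minLeft n K hK x hx j (h j le_rfl (by omega))
  | succ m ih =>
    intro j h
    have h1 : x j < x (j + m + 1) := ih j (fun t ht1 ht2 => h t ht1 (by omega))
    have h2 : x (j + m + 1) < x (j + m + 1 + 1) :=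
      ascent_of_minLeft n K hK x hx (j + m + 1) (h (j + m + 1) (by omega) (by omega))
    calc x j < x (j + m + 1) := h1
      _ < x (j + (m + 1) + 1) := by
        have : j + (m + 1) + 1 = j + m + 1 + 1 := by omega
        rw [this]; exact h2

/-- let `x ∈ X_J⁻¹ ∩ X_K`.  If `i ∈ x⁻¹𝒥_q ∩ 𝒦ₘ` and
`j ∈ x⁻¹𝒥_{q'} ∩ 𝒦ₘ` with `q < q'`, then `i < j`.  Here `x i ∈ 𝒥_q`,
`x j ∈ 𝒥_{q'}`, and since the components `𝒥_q` are intervals ordered by least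
element, `q < q'` is encoded as: `x i`, `x j` lie in different components of the
graph of `J` and `x i < x j`.  Membership in the same `𝒦ₘ` is `sameComp K i j`. -/
theorem stmt4 (n : ℕ) (J K : Set ℕ)
    (hJ : ∀ k ∈ J, k + 1 < n) (hK : ∀ k ∈ K, k + 1 < n)
    (x : Equiv.Perm ℕ) (hx : isMinRight n J x ∧ isMinLeft n K x)
    (i j : ℕ) (hm : sameComp K i j)
    (hq : ¬ sameComp J (x i) (x j)) (hlt : x i < x j) :
    i < j := by
  by_contra h
  push_neg at h
  rcases eq_or_lt_of_le h with heq | hlt'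
  · rw [heq] at hlt; omega
  · -- j < i
    obtain ⟨m, rfl⟩ : ∃ m, i = j + m + 1 := ⟨i - j - 1, by omega⟩
    have hmem : ∀ t, j ≤ t → t < j + m + 1 → t ∈ K := by
      intro t ht1 ht2
      exact hm t (by omega) (by omega)
    have := chain_lt n K hK x hx.2 m j hmem
    omega
end

section
/- Let $J, K \subseteq S$ in $S_n$ and $x \in X_J^{-1} \cap X_K$. With $(\mathcal{J}_1,\dots,\mathcal{J}_r)$ and $(\mathcal{K}_1,\dots,\mathcal{K}_s)$ the ordered presentations of the graphs of $J$ and $K$, the ordered presentation of the graph $x^{-1}\mathcal{J} \cap \mathcal{K}$ is the list $(x^{-1}\mathcal{J}_1 \cap \mathcal{K}_1, x^{-1}\mathcal{J}_2 \cap \mathcal{K}_1, \dots, x^{-1}\mathcal{J}_r \cap \mathcal{K}_1, x^{-1}\mathcal{J}_1 \cap \mathcal{K}_2, \dots, x^{-1}\mathcal{J}_r \cap \mathcal{K}_s)$ with empty sets removed. That is, each nonempty $x^{-1}\mathcal{J}_q \cap \mathcal{K}_m$ is the vertex set of a connected component of $x^{-1}\mathcal{J} \cap \mathcal{K}$, and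 the sets, listed in this order, have strictly increasing elements from one set to the next. -/
open Equiv Pointwise

section Aux

lemma sameComp_symm {J : Set ℕ} {a b : ℕ} (h : sameComp J a b) : sameComp J b a :=
  fun t h1 h2 => h t (by omega) (by omega)

lemma sameComp_trans {J : Set ℕ} {a b c : ℕ} (h1 : sameComp J a b) (h2 : sameComp J b c) :
    sameComp J a c := by
  intro t ht1 ht2
  rcases le_or_gt (max a b) t with h | h
  · exact h2 t (by omega) (by omega)
  · rcases le_or_gt (min a b) t with h' | h'
    · exact h1 t h' h
    · exact h2 t (by omega) (by omega)

lemma symN_lt (n : ℕ) (x : Equiv.Perm ℕ) (hx : x ∈ symN n) (a : ℕ) (ha : a < n) : x a < n := by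
  by_contra hc
  push_neg at hc
  have hx' : ∀ i, n ≤ i → x i = i := hx
  have h1 : x (x a) = x a := hx' (x a) hc
  have := x.injective h1
  omega

lemma mem_inv_image (x : Equiv.Perm ℕ) (S : Set ℕ) (i : ℕ) : i ∈ ⇑x⁻¹ '' S ↔ x i ∈ S := by
  constructor
  · rintro ⟨u, hu, rfl⟩; simpa using hu
  · intro h; exact ⟨x i, h, by simp⟩

lemma chain_mono (S : Set ℕ) (f : ℕ → ℕ) (hf : ∀ k ∈ S, f k < f (k + 1)) :
    ∀ v u, u < v → (∀ t, u ≤ t → t < v → t ∈ S) → f u < f v := by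
  intro v
  induction v with
  | zero => intro u h; omega
  | succ w ih =>
    intro u h ht
    rcases Nat.lt_or_ge u w with h' | h'
    · exact lt_trans (ih u h' (fun t a b => ht t a (by omega)))
        (hf w (ht w (by omega) (by omega)))
    · have hu : u = w := by omega
      subst hu
      exact hf u (ht u (by omega) (by omega))

lemma mono_of_sameComp (S : Set ℕ) (f : ℕ → ℕ) (hf : ∀ k ∈ S, f k < f (k + 1))
    (u v : ℕ) (h : sameComp S u v) (huv : u < v) : f u < f v :=
  chain_mono S f hf v u huv (fun t h1 h2 => h t (by omega) (by omega))

lemma walk_up (P : ℕ → Prop) (S : Set ℕ) (up : ∀ i ∈ S, P i → P (i + 1)) :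
    ∀ v u, u ≤ v → (∀ t, u ≤ t → t < v → t ∈ S) → P u → P v := by
  intro v
  induction v with
  | zero =>
    intro u h _ hp
    have hu : u = 0 := by omega
    subst hu
    exact hp
  | succ w ih =>
    intro u h ht hp
    rcases Nat.lt_or_ge u (w + 1) with h' | h'
    · exact up w (ht w (by omega) (by omega))
        (ih u (by omega) (fun t a b => ht t a (by omega)) hp)
    · have hu : u = w + 1 := by omega
      subst hu
      exact hp

lemma walk_down (P : ℕ → Prop) (S : Set ℕ) (down : ∀ i ∈ S, P (i + 1) → P i) :
    ∀ v u, u ≤ v → (∀ t, u ≤ t → t < v → t ∈ S) → P v → P u := by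
  intro v
  induction v with
  | zero =>
    intro u h _ hp
    have hu : u = 0 := by omega
    subst hu
    exact hp
  | succ w ih =>
    intro u h ht hp
    rcases Nat.lt_or_ge u (w + 1) with h' | h'
    · exact ih u (by omega) (fun t a b => ht t a (by omega))
        (down w (ht w (by omega) (by omega)) hp)
    · have hu : u = w + 1 := by omega
      subst hu
      exact hp

lemma sep_lemma (S : Set ℕ) (b b' i j : ℕ) (h1 : sameComp S b i) (h2 : sameComp S b' j)
    (hne : ¬ sameComp S b b') (hbb : b < b') : i < j := by
  unfold sameComp at hne
  push_neg at hne
  obtain ⟨t, ht1, ht2, ht3⟩ := hne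
  have hi : i ≤ t := by
    by_contra hc
    exact ht3 (h1 t (by omega) (by omega))
  have hj : t < j := by
    by_contra hc
    exact ht3 (h2 t (by omega) (by omega))
  omega

lemma lemA (n k : ℕ) (x : Equiv.Perm ℕ) (hk : k + 1 < n) (h : x (k + 1) < x k) :
    invNum n (x * Equiv.swap k (k + 1)) < invNum n x := by
  classical
  have hsl : Equiv.swap k (k + 1) k = k + 1 := Equiv.swap_apply_left k (k + 1)
  have hsr : Equiv.swap k (k + 1) (k + 1) = k := Equiv.swap_apply_right k (k + 1)
  have hsdef : ∀ a, Equiv.swap k (k + 1) a =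
      if a = k then k + 1 else if a = k + 1 then k else a :=
    fun a => Equiv.swap_apply_def k (k + 1) a
  unfold invNum
  have hmem : (k, k + 1) ∈ (Finset.range n ×ˢ Finset.range n).filter
      (fun p => p.1 < p.2 ∧ x p.2 < x p.1) := by
    simp only [Finset.mem_filter, Finset.mem_product, Finset.mem_range]
    exact ⟨⟨by omega, hk⟩, by omega, h⟩
  refine lt_of_le_of_lt (Finset.card_le_card_of_injOn
    (fun p => (Equiv.swap k (k + 1) p.1, Equiv.swap k (k + 1) p.2)) ?_ ?_)
    (Finset.card_erase_lt_of_mem hmem)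
  · intro p hp
    change p ∈ Finset.filter _ _ at hp
    obtain ⟨hp1, h3, h4⟩ := Finset.mem_filter.mp hp
    obtain ⟨h1, h2⟩ := Finset.mem_product.mp hp1
    rw [Finset.mem_range] at h1 h2
    simp only [Equiv.Perm.mul_apply] at h4
    have hpne : ¬(p.1 = k ∧ p.2 = k + 1) := by
      rintro ⟨e1, e2⟩
      rw [e1, e2, hsl, hsr] at h4
      omega
    have hord : Equiv.swap k (k + 1) p.1 < Equiv.swap k (k + 1) p.2 := by
      rw [hsdef, hsdef]
      split_ifs <;> omega
    change _ ∈ Finset.erase _ _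
    rw [Finset.mem_erase]
    constructor
    · intro e
      have e1 : Equiv.swap k (k + 1) p.1 = k := congrArg Prod.fst e
      have e2 : Equiv.swap k (k + 1) p.2 = k + 1 := congrArg Prod.snd e
      rw [hsdef] at e1
      rw [hsdef] at e2
      split_ifs at e1 e2 <;> omega
    · simp only [Finset.mem_filter, Finset.mem_product, Finset.mem_range]
      refine ⟨⟨?_, ?_⟩, hord, h4⟩
      · rw [hsdef]; split_ifs <;> omega
      · rw [hsdef]; split_ifs <;> omega
  · intro p hp q hq e
    have e1 := (Equiv.swap k (k + 1)).injective (congrArg Prod.fst e)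
    have e2 := (Equiv.swap k (k + 1)).injective (congrArg Prod.snd e)
    exact Prod.ext e1 e2

lemma lemB (n j : ℕ) (x : Equiv.Perm ℕ) (hj : j + 1 < n) (hx : x ∈ symN n)
    (h : x⁻¹ (j + 1) < x⁻¹ j) :
    invNum n (Equiv.swap j (j + 1) * x) < invNum n x := by
  classical
  have hxinv : x⁻¹ ∈ symN n := (symN n).inv_mem hx
  have hltn : ∀ a, a < n → x⁻¹ a < n := fun a ha => symN_lt n x⁻¹ hxinv a ha
  have hsdef : ∀ a, Equiv.swap j (j + 1) a =
      if a = j then j + 1 else if a = j + 1 then j else a :=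
    fun a => Equiv.swap_apply_def j (j + 1) a
  unfold invNum
  have hmem : (x⁻¹ (j + 1), x⁻¹ j) ∈ (Finset.range n ×ˢ Finset.range n).filter
      (fun p => p.1 < p.2 ∧ x p.2 < x p.1) := by
    simp only [Finset.mem_filter, Finset.mem_product, Finset.mem_range]
    refine ⟨⟨hltn _ hj, hltn _ (by omega)⟩, h, ?_⟩
    rw [show x (x⁻¹ j) = j from x.apply_symm_apply j,
      show x (x⁻¹ (j + 1)) = j + 1 from x.apply_symm_apply (j + 1)]
    omega
  refine lt_of_le_of_lt (Finset.card_le_card_of_injOn id ?_ (fun a _ b _ e => e))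
    (Finset.card_erase_lt_of_mem hmem)
  intro p hp
  change p ∈ Finset.filter _ _ at hp
  obtain ⟨hp1, h3, h4⟩ := Finset.mem_filter.mp hp
  obtain ⟨h1, h2⟩ := Finset.mem_product.mp hp1
  rw [Finset.mem_range] at h1 h2
  simp only [Equiv.Perm.mul_apply] at h4
  have hne : ¬(x p.1 = j ∧ x p.2 = j + 1) := by
    rintro ⟨e1, e2⟩
    have f1 : p.1 = x⁻¹ j := by rw [← e1]; simp
    have f2 : p.2 = x⁻¹ (j + 1) := by rw [← e2]; simp
    omega
  rw [hsdef, hsdef] at h4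
  change _ ∈ Finset.erase _ _
  rw [Finset.mem_erase]
  constructor
  · intro e
    have f1 : p.1 = x⁻¹ (j + 1) := congrArg Prod.fst e
    have f2 : p.2 = x⁻¹ j := congrArg Prod.snd e
    have g1 : x p.1 = j + 1 := by rw [f1]; simp
    have g2 : x p.2 = j := by rw [f2]; simp
    split_ifs at h4 <;> omega
  · simp only [Finset.mem_filter, Finset.mem_product, Finset.mem_range, id_eq]
    refine ⟨⟨h1, h2⟩, h3, ?_⟩
    split_ifs at h4 <;> omega

end Aux

/-- the Lemma: let `x ∈ X_J⁻¹ ∩ X_K`.  Then the ordered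
presentation of `x⁻¹𝒥 ∩ 𝒦` consists of the nonempty sets `x⁻¹𝒥_q ∩ 𝒦ₘ`,
listed with `m` major and `q` minor: each nonempty `x⁻¹𝒥_q ∩ 𝒦ₘ` is the vertex
set of a connected component of `x⁻¹𝒥 ∩ 𝒦`, and all elements of a set earlier
in the list are smaller than all elements of a later set.  Earlier means
`m < m'`, or `m = m'` and `q < q'`; since components are intervals ordered by
least element, this is encoded by comparing arbitrary representatives. -/
theorem stmt7 (n : ℕ) (J K : Set ℕ)
    (hJ : ∀ k ∈ J, k + 1 < n) (hK : ∀ k ∈ K, k + 1 < n)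
    (x : Equiv.Perm ℕ) (hx : isMinRight n J x ∧ isMinLeft n K x) :
    (∀ a b c : ℕ, c ∈ (⇑x⁻¹ '' comp J a) ∩ comp K b →
        (⇑x⁻¹ '' comp J a) ∩ comp K b = comp (imgEdges x J ∩ K) c) ∧
    (∀ a b a' b' i j : ℕ,
        i ∈ (⇑x⁻¹ '' comp J a) ∩ comp K b →
        j ∈ (⇑x⁻¹ '' comp J a') ∩ comp K b' →
        ((¬ sameComp K b b' ∧ b < b') ∨
          (sameComp K b b' ∧ ¬ sameComp J a a' ∧ a < a')) →
        i < j) := by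
  classical
  obtain ⟨hR, hL⟩ := hx
  have hxmem : x ∈ symN n := hL.1
  have hfA : ∀ k ∈ K, x k < x (k + 1) := by
    intro k hk
    by_contra hc
    push_neg at hc
    have hne : x k ≠ x (k + 1) := fun e => by
      have := x.injective e
      omega
    have h' : x (k + 1) < x k := by omega
    have h1 := hL.2 (Equiv.swap k (k + 1)) (Subgroup.subset_closure ⟨k, hk, rfl⟩)
    have h2 := lemA n k x (hK k hk) h'
    omega
  have hfB : ∀ j ∈ J, x⁻¹ j < x⁻¹ (j + 1) := by
    intro j hj
    by_contra hc
    push_neg at hc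
    have hne : x⁻¹ j ≠ x⁻¹ (j + 1) := fun e => by
      have := x⁻¹.injective e
      omega
    have h' : x⁻¹ (j + 1) < x⁻¹ j := by omega
    have h1 := hR.2 (Equiv.swap j (j + 1)) (Subgroup.subset_closure ⟨j, hj, rfl⟩)
    have h2 := lemB n j x (hJ j hj) hxmem h'
    omega
  -- structure of edges of the intersection graph
  have hedge : ∀ i ∈ imgEdges x J ∩ K, i ∈ K ∧ x (i + 1) = x i + 1 ∧ x i ∈ J := by
    rintro i ⟨⟨t, htJ, hcase⟩, hiK⟩
    have hlt := hfA i hiK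
    rcases hcase with ⟨e1, e2⟩ | ⟨e1, e2⟩
    · exact ⟨hiK, by omega, by rw [e1]; exact htJ⟩
    · omega
  -- consecutive members of a block give an edge
  have hclaim2 : ∀ a b i, i ∈ (⇑x⁻¹ '' comp J a) ∩ comp K b →
      i + 1 ∈ (⇑x⁻¹ '' comp J a) ∩ comp K b → i ∈ imgEdges x J ∩ K := by
    rintro a b i ⟨hi1, hi2⟩ ⟨hj1, hj2⟩
    have hxi : x i ∈ comp J a := (mem_inv_image x _ i).mp hi1
    have hxi1 : x (i + 1) ∈ comp J a := (mem_inv_image x _ (i + 1)).mp hj1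
    have hKi : sameComp K i (i + 1) := sameComp_trans (sameComp_symm hi2) hj2
    have hiK : i ∈ K := hKi i (by omega) (by omega)
    have hlt : x i < x (i + 1) := hfA i hiK
    have hJsame : sameComp J (x i) (x (i + 1)) := sameComp_trans (sameComp_symm hxi) hxi1
    by_cases he : x (i + 1) = x i + 1
    · refine ⟨⟨x i, ?_, Or.inl ⟨rfl, he⟩⟩, hiK⟩
      exact hJsame (x i) (by omega) (by omega)
    · exfalso
      have h1 : sameComp J (x i) (x i + 1) := fun t ht1 ht2 => hJsame t (by omega) (by omega)
      have h2 : sameComp J (x i + 1) (x (i + 1)) := fun t ht1 ht2 =>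
        hJsame t (by omega) (by omega)
      have m1 := mono_of_sameComp J (⇑x⁻¹) hfB (x i) (x i + 1) h1 (by omega)
      have m2 := mono_of_sameComp J (⇑x⁻¹) hfB (x i + 1) (x (i + 1)) h2 (by omega)
      rw [show x⁻¹ (x i) = i from x.symm_apply_apply i] at m1
      rw [show x⁻¹ (x (i + 1)) = i + 1 from x.symm_apply_apply (i + 1)] at m2
      omega
  -- stepping along an edge stays in the block
  have hstep_up : ∀ a b i, i ∈ imgEdges x J ∩ K →
      i ∈ (⇑x⁻¹ '' comp J a) ∩ comp K b → i + 1 ∈ (⇑x⁻¹ '' comp J a) ∩ comp K b := by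
    rintro a b i hG ⟨h1, h2⟩
    obtain ⟨hiK, hxe, hxJ⟩ := hedge i hG
    have hxi : x i ∈ comp J a := (mem_inv_image x _ i).mp h1
    constructor
    · rw [mem_inv_image]
      have hs : sameComp J (x i) (x (i + 1)) := by
        intro t ht1 ht2
        have : t = x i := by omega
        rw [this]; exact hxJ
      exact sameComp_trans hxi hs
    · have hs : sameComp K i (i + 1) := by
        intro t ht1 ht2
        have : t = i := by omega
        rw [this]; exact hiK
      exact sameComp_trans h2 hs
  have hstep_down : ∀ a b i, i ∈ imgEdges x J ∩ K →
      i + 1 ∈ (⇑x⁻¹ '' comp J a) ∩ comp K b → i ∈ (⇑x⁻¹ '' comp J a) ∩ comp K b := by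
    rintro a b i hG ⟨h1, h2⟩
    obtain ⟨hiK, hxe, hxJ⟩ := hedge i hG
    have hxi : x (i + 1) ∈ comp J a := (mem_inv_image x _ (i + 1)).mp h1
    constructor
    · rw [mem_inv_image]
      have hs : sameComp J (x (i + 1)) (x i) := by
        intro t ht1 ht2
        have : t = x i := by omega
        rw [this]; exact hxJ
      exact sameComp_trans hxi hs
    · have hs : sameComp K (i + 1) i := by
        intro t ht1 ht2
        have : t = i := by omega
        rw [this]; exact hiK
      exact sameComp_trans h2 hs
  -- intervals: anything between two members of a block is in the block
  have hbetween : ∀ a b c d e, c ∈ (⇑x⁻¹ '' comp J a) ∩ comp K b →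
      d ∈ (⇑x⁻¹ '' comp J a) ∩ comp K b → c ≤ e → e ≤ d →
      e ∈ (⇑x⁻¹ '' comp J a) ∩ comp K b := by
    rintro a b c d e ⟨hc1, hc2⟩ ⟨hd1, hd2⟩ h1 h2
    have hxc : x c ∈ comp J a := (mem_inv_image x _ c).mp hc1
    have hxd : x d ∈ comp J a := (mem_inv_image x _ d).mp hd1
    have hKcd : sameComp K c d := sameComp_trans (sameComp_symm hc2) hd2
    have hKce : sameComp K c e := fun t ht1 ht2 => hKcd t (by omega) (by omega)
    have hKed : sameComp K e d := fun t ht1 ht2 => hKcd t (by omega) (by omega)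
    have hxce : x c ≤ x e := by
      rcases Nat.eq_or_lt_of_le h1 with h | h
      · rw [h]
      · exact le_of_lt (mono_of_sameComp K (⇑x) hfA c e hKce h)
    have hxed : x e ≤ x d := by
      rcases Nat.eq_or_lt_of_le h2 with h | h
      · rw [h]
      · exact le_of_lt (mono_of_sameComp K (⇑x) hfA e d hKed h)
    have hJcd : sameComp J (x c) (x d) := sameComp_trans (sameComp_symm hxc) hxd
    have hJce : sameComp J (x c) (x e) := fun t ht1 ht2 => hJcd t (by omega) (by omega)
    exact ⟨(mem_inv_image x _ e).mpr (sameComp_trans hxc hJce), sameComp_trans hc2 hKce⟩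
  have hbetween' : ∀ a b c d e, c ∈ (⇑x⁻¹ '' comp J a) ∩ comp K b →
      d ∈ (⇑x⁻¹ '' comp J a) ∩ comp K b → min c d ≤ e → e ≤ max c d →
      e ∈ (⇑x⁻¹ '' comp J a) ∩ comp K b := by
    intro a b c d e hc hd h1 h2
    rcases le_total c d with h | h
    · exact hbetween a b c d e hc hd (by omega) (by omega)
    · exact hbetween a b d c e hd hc (by omega) (by omega)
  constructor
  · intro a b c hc
    ext d
    constructor
    · intro hd
      show sameComp (imgEdges x J ∩ K) c d
      intro t ht1 ht2
      exact hclaim2 a b t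
        (hbetween' a b c d t hc hd ht1 (by omega))
        (hbetween' a b c d (t + 1) hc hd (by omega) (by omega))
    · intro hd
      have hd' : sameComp (imgEdges x J ∩ K) c d := hd
      rcases le_total c d with h | h
      · exact walk_up (fun e => e ∈ (⇑x⁻¹ '' comp J a) ∩ comp K b) (imgEdges x J ∩ K)
          (fun i hiG hP => hstep_up a b i hiG hP) d c h
          (fun t h1 h2 => hd' t (by omega) (by omega)) hc
      · exact walk_down (fun e => e ∈ (⇑x⁻¹ '' comp J a) ∩ comp K b) (imgEdges x J ∩ K)
          (fun i hiG hP => hstep_down a b i hiG hP) c d h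
          (fun t h1 h2 => hd' t (by omega) (by omega)) hc
  · intro a b a' b' i j hi hj hcase
    obtain ⟨hi1, hi2⟩ := hi
    obtain ⟨hj1, hj2⟩ := hj
    rcases hcase with ⟨hne, hbb⟩ | ⟨hsame, hne, haa⟩
    · exact sep_lemma K b b' i j hi2 hj2 hne hbb
    · have hxi : x i ∈ comp J a := (mem_inv_image x _ i).mp hi1
      have hxj : x j ∈ comp J a' := (mem_inv_image x _ j).mp hj1
      have hxij : x i < x j := sep_lemma J a a' (x i) (x j) hxi hxj hne haa
      by_contra hc
      push_neg at hc
      rcases Nat.eq_or_lt_of_le hc with h | h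
      · rw [h] at hxij; omega
      · have hK1 : sameComp K j i :=
          sameComp_trans (sameComp_symm hj2) (sameComp_trans (sameComp_symm hsame) hi2)
        have := mono_of_sameComp K (⇑x) hfA j i hK1 h
        omega
end

section
/- The $\mathbb{Z}$-span of the elements $B_\nu = \sum_{\sigma \in X_\nu} \sigma$, as $\nu$ ranges over all compositions of $n$, is closed under multiplication in the group algebra $\mathbb{Z}[S_n]$; i.e., it forms a subring (the descent algebra of $S_n$). -/
open Equiv Pointwise

/-- The basis element `B_ν = ∑_{σ ∈ X_ν} σ` of the descent algebra, in the group
algebra `ℤ[Sₙ]` (realized inside the monoid algebra of `Equiv.Perm ℕ`). -/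
noncomputable def B (n : ℕ) (ν : List ℕ) : MonoidAlgebra ℤ (Equiv.Perm ℕ) :=
  ∑ᶠ σ ∈ {x | isMinLeft n (edgesOf ν) x}, MonoidAlgebra.single σ (1 : ℤ)


namespace S12
open Finset

/-! ### partial sums and blocks -/

def psum (c : List ℕ) (q : ℕ) : ℕ := (c.take q).sum

lemma mem_blockSet_iff {c : List ℕ} {q i : ℕ} :
    i ∈ blockSet c q ↔ psum c q ≤ i ∧ i < psum c (q + 1) := Iff.rfl

lemma psum_le_succ (c : List ℕ) (q : ℕ) : psum c q ≤ psum c (q + 1) := by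
  unfold psum
  rw [List.take_succ]
  simp

lemma psum_mono (c : List ℕ) : Monotone (psum c) :=
  monotone_nat_of_le_succ (psum_le_succ c)

lemma psum_le_sum (c : List ℕ) (q : ℕ) : psum c q ≤ c.sum := by
  conv_rhs => rw [← List.take_append_drop q c]
  rw [List.sum_append]
  exact Nat.le_add_right _ _

lemma mem_block_lt {n : ℕ} {c : List ℕ} (hc : c.sum = n) {q i : ℕ}
    (h : i ∈ blockSet c q) : i < n :=
  lt_of_lt_of_le h.2 (hc ▸ psum_le_sum c _)

lemma exists_block : ∀ (c : List ℕ) (i : ℕ), i < c.sum → ∃ q, i ∈ blockSet c q := by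
  intro c
  induction c with
  | nil => intro i hi; simp at hi
  | cons a t ih =>
    intro i hi
    by_cases h : i < a
    · exact ⟨0, by simp [mem_blockSet_iff, psum], by simpa [mem_blockSet_iff, psum]⟩
    · push_neg at h
      have hi' : i - a < t.sum := by simp [List.sum_cons] at hi; omega
      obtain ⟨q, hq⟩ := ih (i - a) hi'
      refine ⟨q + 1, ?_, ?_⟩
      · show psum (a :: t) (q + 1) ≤ i
        simp only [psum, List.take_succ_cons, List.sum_cons]
        have := hq.1
        omega
      · show i < psum (a :: t) (q + 2)
        simp only [psum, List.take_succ_cons, List.sum_cons]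
        have := hq.2
        omega

lemma block_unique {c : List ℕ} {i q q' : ℕ}
    (h : i ∈ blockSet c q) (h' : i ∈ blockSet c q') : q = q' := by
  rw [mem_blockSet_iff] at h h'
  by_contra hne
  rcases Nat.lt_or_ge q q' with hlt | hge
  · have : psum c (q + 1) ≤ psum c q' := psum_mono c hlt
    have := h.2; have := h'.1; omega
  · have hlt : q' < q := by omega
    have : psum c (q' + 1) ≤ psum c q := psum_mono c hlt
    have := h'.2; have := h.1; omega

lemma block_lt_block {c : List ℕ} {i j q q' : ℕ} (hqq : q < q')
    (hi : i ∈ blockSet c q) (hj : j ∈ blockSet c q') : i < j := by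
  rw [mem_blockSet_iff] at hi hj
  have : psum c (q + 1) ≤ psum c q' := psum_mono c hqq
  have := hi.2; have := hj.1; omega

open scoped Classical in
noncomputable def bIdx (c : List ℕ) (i : ℕ) : ℕ :=
  if h : ∃ q, i ∈ blockSet c q then h.choose else 0

lemma mem_block_bIdx {c : List ℕ} {i : ℕ} (h : ∃ q, i ∈ blockSet c q) :
    i ∈ blockSet c (bIdx c i) := by
  classical
  rw [bIdx]
  rw [dif_pos h]
  exact h.choose_spec

lemma bIdx_eq {c : List ℕ} {i q : ℕ} (h : i ∈ blockSet c q) : bIdx c i = q :=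
  block_unique (mem_block_bIdx ⟨q, h⟩) h

lemma mem_block_bIdx' {n : ℕ} {c : List ℕ} (hc : c.sum = n) {i : ℕ} (hi : i < n) :
    i ∈ blockSet c (bIdx c i) :=
  mem_block_bIdx (exists_block c i (hc ▸ hi))

lemma bIdx_lt_imp {n : ℕ} {c : List ℕ} (hc : c.sum = n) {i j : ℕ} (hi : i < n) (hj : j < n)
    (h : bIdx c i < bIdx c j) : i < j :=
  block_lt_block h (mem_block_bIdx' hc hi) (mem_block_bIdx' hc hj)

lemma bIdx_le_of_le {n : ℕ} {c : List ℕ} (hc : c.sum = n) {i j : ℕ} (hi : i < n) (hj : j < n)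
    (h : i ≤ j) : bIdx c i ≤ bIdx c j := by
  by_contra hcon
  push_neg at hcon
  exact absurd (bIdx_lt_imp hc hj hi hcon) (by omega)

/-! ### increasing on blocks -/

def adjInc (c : List ℕ) (x : Equiv.Perm ℕ) : Prop := ∀ k ∈ edgesOf c, x k < x (k + 1)

lemma incOn_of_adjInc {c : List ℕ} {x : Equiv.Perm ℕ} (hx : adjInc c x) {q i j : ℕ}
    (hi : i ∈ blockSet c q) (hj : j ∈ blockSet c q) (hij : i < j) : x i < x j := by
  have key : ∀ d i, i ∈ blockSet c q → i + d + 1 ∈ blockSet c q → x i < x (i + d + 1) := by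
    intro d
    induction d with
    | zero => intro i hi hj; exact hx i ⟨q, hi, hj⟩
    | succ d ih =>
      intro i hi hj
      have hi1 : i + 1 ∈ blockSet c q := by
        rw [mem_blockSet_iff] at *
        omega
      have h1 : x i < x (i + 1) := hx i ⟨q, hi, hi1⟩
      have h2 : x (i + 1) < x (i + 1 + d + 1) := ih (i + 1) hi1 (by
        have : i + 1 + d + 1 = i + (d + 1) + 1 := by omega
        rw [this]; exact hj)
      have : i + (d + 1) + 1 = i + 1 + d + 1 := by omega
      rw [this]; omega
  have he : i + (j - i - 1) + 1 = j := by omega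
  have := key (j - i - 1) i hi (by rw [he]; exact hj)
  rwa [he] at this

end S12

-- continuation: appended to part1 content for testing
namespace S12
open Finset

lemma mem_symN {n : ℕ} {x : Equiv.Perm ℕ} : x ∈ symN n ↔ ∀ i, n ≤ i → x i = i := Iff.rfl

lemma symN_lt {n : ℕ} {x : Equiv.Perm ℕ} (hx : x ∈ symN n) {i : ℕ} (hi : i < n) : x i < n := by
  by_contra h
  push_neg at h
  have hinv : x⁻¹ ∈ symN n := (symN n).inv_mem hx
  have h2 : x⁻¹ (x i) = x i := hinv _ h
  rw [Equiv.Perm.coe_inv, Equiv.symm_apply_apply] at h2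
  omega

/-! ### the block stabilizer subgroup -/

def blockStab (c : List ℕ) : Subgroup (Equiv.Perm ℕ) where
  carrier := {w | ∀ i q, i ∈ blockSet c q ↔ w i ∈ blockSet c q}
  one_mem' := by intro i q; simp
  mul_mem' := by
    intro a b ha hb i q
    exact (hb i q).trans (ha (b i) q)
  inv_mem' := by
    intro a ha i q
    have := (ha (a⁻¹ i) q).symm
    rwa [Equiv.Perm.coe_inv, Equiv.apply_symm_apply] at this

lemma parabolic_le_blockStab (c : List ℕ) : parabolic (edgesOf c) ≤ blockStab c := by
  rw [parabolic]
  apply Subgroup.closure_le (blockStab c) |>.mpr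
  rintro w ⟨k, hk, rfl⟩
  obtain ⟨q0, hq0, hq0'⟩ := hk
  intro i q
  rcases eq_or_ne i k with rfl | hik
  · rw [Equiv.swap_apply_left]
    constructor
    · intro h; rwa [block_unique hq0 h] at hq0'
    · intro h; rwa [block_unique hq0' h] at hq0
  · rcases eq_or_ne i (k + 1) with rfl | hik1
    · rw [Equiv.swap_apply_right]
      constructor
      · intro h; rwa [block_unique hq0' h] at hq0
      · intro h; rwa [block_unique hq0 h] at hq0'
    · rw [Equiv.swap_apply_of_ne_of_ne hik hik1]

/-! ### inversion counting -/

lemma swap_lt_n {n k j : ℕ} (hk : k + 1 < n) (hj : j < n) : Equiv.swap k (k + 1) j < n := by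
  rcases eq_or_ne j k with rfl | h1
  · rwa [Equiv.swap_apply_left]
  rcases eq_or_ne j (k + 1) with rfl | h2
  · rw [Equiv.swap_apply_right]; omega
  · rwa [Equiv.swap_apply_of_ne_of_ne h1 h2]

lemma invNum_mul_swap_lt {n : ℕ} {x : Equiv.Perm ℕ} {k : ℕ} (hk1 : k + 1 < n)
    (hx : x (k + 1) < x k) :
    invNum n (x * Equiv.swap k (k + 1)) < invNum n x := by
  classical
  set s := Equiv.swap k (k + 1) with hs
  have hmem : (k, k + 1) ∈ (Finset.range n ×ˢ Finset.range n).filter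
      (fun p => p.1 < p.2 ∧ x p.2 < x p.1) := by
    simp only [mem_filter, mem_product, mem_range]
    exact ⟨⟨by omega, hk1⟩, by omega, hx⟩
  have hcard : invNum n (x * s) ≤
      (((Finset.range n ×ˢ Finset.range n).filter
        (fun p => p.1 < p.2 ∧ x p.2 < x p.1)).erase (k, k + 1)).card := by
    apply Finset.card_le_card_of_injOn (fun p => (s p.1, s p.2))
    · intro p hp
      simp only [invNum, Finset.mem_coe, mem_filter, mem_product, mem_range] at hp
      obtain ⟨⟨hp1, hp2⟩, hplt, hpinv⟩ := hp
      have hpinv' : x (s p.2) < x (s p.1) := by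
        simpa [Equiv.Perm.mul_apply] using hpinv
      have hne : ¬(p.1 = k ∧ p.2 = k + 1) := by
        rintro ⟨e1, e2⟩
        rw [e1, e2] at hpinv'
        rw [Equiv.swap_apply_left, Equiv.swap_apply_right] at hpinv'
        omega
      have hslt : s p.1 < s p.2 := by
        simp only [hs, Equiv.swap_apply_def]
        split_ifs <;> omega
      rw [Finset.mem_coe, Finset.mem_erase]
      constructor
      · intro hcontra
        have h1 : s p.1 = k := congrArg Prod.fst hcontra
        have h2 : s p.2 = k + 1 := congrArg Prod.snd hcontra
        have : p.1 = s k := by rw [← h1, Equiv.swap_apply_self]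
        rw [Equiv.swap_apply_left] at this
        have : p.2 = s (k+1) := by rw [← h2, Equiv.swap_apply_self]
        rw [Equiv.swap_apply_right] at this
        omega
      · simp only [mem_filter, mem_product, mem_range]
        exact ⟨⟨swap_lt_n hk1 hp1, swap_lt_n hk1 hp2⟩, hslt, hpinv'⟩
    · intro p _ p' _ h
      have e1 : s p.1 = s p'.1 := congrArg Prod.fst h
      have e2 : s p.2 = s p'.2 := congrArg Prod.snd h
      exact Prod.ext (s.injective e1) (s.injective e2)
  have h2 := Finset.card_erase_lt_of_mem hmem
  unfold invNum at hcard ⊢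
  omega

lemma invNum_le_of_incOn {n : ℕ} {c : List ℕ} {x w : Equiv.Perm ℕ} (hc : c.sum = n)
    (hw : w ∈ blockStab c)
    (hx : ∀ q i j, i ∈ blockSet c q → j ∈ blockSet c q → i < j → x i < x j) :
    invNum n x ≤ invNum n (x * w) := by
  classical
  have hwinv : w⁻¹ ∈ blockStab c := (blockStab c).inv_mem hw
  apply Finset.card_le_card_of_injOn (fun p => (w⁻¹ p.1, w⁻¹ p.2))
  · intro p hp
    simp only [Finset.mem_coe, mem_filter, mem_product, mem_range] at hp
    obtain ⟨⟨hp1, hp2⟩, hplt, hpinv⟩ := hp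
    have hb1 : p.1 ∈ blockSet c (bIdx c p.1) := mem_block_bIdx' hc hp1
    have hb2 : p.2 ∈ blockSet c (bIdx c p.2) := mem_block_bIdx' hc hp2
    have hble : bIdx c p.1 ≤ bIdx c p.2 := bIdx_le_of_le hc hp1 hp2 (le_of_lt hplt)
    have hbne : bIdx c p.1 ≠ bIdx c p.2 := by
      intro he
      have := hx (bIdx c p.1) p.1 p.2 hb1 (he ▸ hb2) hplt
      omega
    have hblt : bIdx c p.1 < bIdx c p.2 := lt_of_le_of_ne hble hbne
    have hw1 : w⁻¹ p.1 ∈ blockSet c (bIdx c p.1) := (hwinv p.1 (bIdx c p.1)).mp hb1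
    have hw2 : w⁻¹ p.2 ∈ blockSet c (bIdx c p.2) := (hwinv p.2 (bIdx c p.2)).mp hb2
    simp only [Finset.mem_coe, mem_filter, mem_product, mem_range]
    refine ⟨⟨mem_block_lt hc hw1, mem_block_lt hc hw2⟩, block_lt_block hblt hw1 hw2, ?_⟩
    simp only [Equiv.Perm.mul_apply, Equiv.Perm.coe_inv, Equiv.apply_symm_apply]
    exact hpinv
  · intro p _ p' _ h
    have e1 := w⁻¹.injective (congrArg Prod.fst h : w⁻¹ p.1 = w⁻¹ p'.1)
    have e2 := w⁻¹.injective (congrArg Prod.snd h : w⁻¹ p.2 = w⁻¹ p'.2)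
    exact Prod.ext e1 e2

lemma edges_lt {n : ℕ} {c : List ℕ} (hc : c.sum = n) {k : ℕ} (hk : k ∈ edgesOf c) :
    k + 1 < n := by
  obtain ⟨q, _, h2⟩ := hk
  exact mem_block_lt hc h2

/-- The key characterization: minimal coset representatives are exactly the
permutations in `Sₙ` increasing along each edge of the composition. -/
lemma isMinLeft_iff {n : ℕ} {c : List ℕ} (hc : isComposition n c) (x : Equiv.Perm ℕ) :
    isMinLeft n (edgesOf c) x ↔ x ∈ symN n ∧ adjInc c x := by
  constructor
  · rintro ⟨hs, hmin⟩
    refine ⟨hs, ?_⟩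
    intro k hk
    have hk1 : k + 1 < n := edges_lt hc.1 hk
    by_contra h
    have hne : x k ≠ x (k + 1) := fun e => by
      have := x.injective e; omega
    have hlt : x (k + 1) < x k := by omega
    have hswap : Equiv.swap k (k + 1) ∈ parabolic (edgesOf c) :=
      Subgroup.subset_closure ⟨k, hk, rfl⟩
    exact absurd (hmin _ hswap) (not_le.2 (invNum_mul_swap_lt hk1 hlt))
  · rintro ⟨hs, hadj⟩
    refine ⟨hs, fun w hw => invNum_le_of_incOn hc.1 (parabolic_le_blockStab c hw) ?_⟩
    intro q i j hi hj hij
    exact incOn_of_adjInc hadj hi hj hij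

/-! ### finiteness -/

lemma symN_finite (n : ℕ) : ((symN n : Subgroup (Equiv.Perm ℕ)) : Set (Equiv.Perm ℕ)).Finite := by
  have hinj : Function.Injective
      (fun x : ((symN n : Subgroup (Equiv.Perm ℕ)) : Set (Equiv.Perm ℕ)) =>
        (fun i : Fin n => (⟨x.1 i, symN_lt x.2 i.2⟩ : Fin n))) := by
    intro x y h
    apply Subtype.ext
    apply Equiv.ext
    intro i
    by_cases hi : i < n
    · have := congrFun h ⟨i, hi⟩
      simpa [Fin.ext_iff] using this
    · push_neg at hi
      rw [x.2 i hi, y.2 i hi]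
  have : Finite ((symN n : Subgroup (Equiv.Perm ℕ)) : Set (Equiv.Perm ℕ)) :=
    Finite.of_injective _ hinj
  exact Set.toFinite _

lemma minLeft_finite (n : ℕ) (J : Set ℕ) : {x | isMinLeft n J x}.Finite :=
  (symN_finite n).subset (fun _ hx => hx.1)

end S12

namespace S12
open Finset

/-! ### monotone functions with equal fibers agree -/

lemma mono_le_iff_card {n : ℕ} {f : ℕ → ℕ} (hf : ∀ i j, i ≤ j → j < n → f i ≤ f j)
    {v r : ℕ} (hr : r < n) :
    f r ≤ v ↔ r < ((range n).filter (fun i => f i ≤ v)).card := by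
  constructor
  · intro h
    have hsub : range (r + 1) ⊆ (range n).filter (fun i => f i ≤ v) := by
      intro i hi
      rw [mem_range] at hi
      rw [mem_filter, mem_range]
      exact ⟨by omega, le_trans (hf i r (by omega) hr) h⟩
    have := Finset.card_le_card hsub
    rw [card_range] at this
    omega
  · intro h
    by_contra hcon
    push_neg at hcon
    have hsub : (range n).filter (fun i => f i ≤ v) ⊆ range r := by
      intro i hi
      rw [mem_filter, mem_range] at hi
      rw [mem_range]
      by_contra hge
      push_neg at hge
      have := hf r i hge hi.1
      omega
    have := Finset.card_le_card hsub
    rw [card_range] at this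
    omega

lemma mono_eq_of_fibers {n : ℕ} {f g : ℕ → ℕ}
    (hf : ∀ i j, i ≤ j → j < n → f i ≤ f j) (hg : ∀ i j, i ≤ j → j < n → g i ≤ g j)
    (hcard : ∀ v, ((range n).filter (fun i => f i = v)).card =
      ((range n).filter (fun i => g i = v)).card) {r : ℕ} (hr : r < n) : f r = g r := by
  have hle : ∀ v, ((range n).filter (fun i => f i ≤ v)).card =
      ((range n).filter (fun i => g i ≤ v)).card := by
    intro v
    induction v with
    | zero =>
      have h1 : (range n).filter (fun i => f i ≤ 0) = (range n).filter (fun i => f i = 0) :=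
        filter_congr (fun i _ => by omega)
      have h2 : (range n).filter (fun i => g i ≤ 0) = (range n).filter (fun i => g i = 0) :=
        filter_congr (fun i _ => by omega)
      rw [h1, h2]; exact hcard 0
    | succ v ih =>
      have h1 : (range n).filter (fun i => f i ≤ v + 1) =
          (range n).filter (fun i => f i ≤ v) ∪ (range n).filter (fun i => f i = v + 1) := by
        rw [← filter_or]; exact filter_congr (fun i _ => by omega)
      have h2 : (range n).filter (fun i => g i ≤ v + 1) =
          (range n).filter (fun i => g i ≤ v) ∪ (range n).filter (fun i => g i = v + 1) := by
        rw [← filter_or]; exact filter_congr (fun i _ => by omega)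
      have hd1 : Disjoint ((range n).filter (fun i => f i ≤ v))
          ((range n).filter (fun i => f i = v + 1)) := by
        rw [Finset.disjoint_left]
        intro i hi hi'
        rw [mem_filter] at hi hi'
        omega
      have hd2 : Disjoint ((range n).filter (fun i => g i ≤ v))
          ((range n).filter (fun i => g i = v + 1)) := by
        rw [Finset.disjoint_left]
        intro i hi hi'
        rw [mem_filter] at hi hi'
        omega
      rw [h1, h2, Finset.card_union_of_disjoint hd1, Finset.card_union_of_disjoint hd2,
        ih, hcard (v + 1)]
  have key : ∀ v, f r ≤ v ↔ g r ≤ v := by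
    intro v
    rw [mono_le_iff_card hf hr, mono_le_iff_card hg hr, hle v]
  exact le_antisymm ((key (g r)).mpr le_rfl) ((key (f r)).mp le_rfl)

/-! ### the resorting permutation -/

noncomputable def sortKey (n : ℕ) (ν : List ℕ) (z : Equiv.Perm ℕ) : Fin n → ℕ ×ₗ ℕ :=
  fun a => toLex (bIdx ν (z a), (a : ℕ))

noncomputable def resort (n : ℕ) (ν : List ℕ) (z : Equiv.Perm ℕ) : Equiv.Perm ℕ :=
  (Tuple.sort (sortKey n ν z)).extendDomain Fin.equivSubtype

variable {n : ℕ} {ν : List ℕ} {z : Equiv.Perm ℕ}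

lemma sortKey_injective : Function.Injective (sortKey n ν z) := by
  intro a b h
  have : ((a : ℕ)) = (b : ℕ) := congrArg (fun p => (ofLex p).2) h
  exact Fin.ext this

lemma sortKey_strictMono :
    StrictMono (sortKey n ν z ∘ Tuple.sort (sortKey n ν z)) :=
  (Tuple.monotone_sort _).strictMono_of_injective
    (sortKey_injective.comp (Tuple.sort (sortKey n ν z)).injective)

lemma resort_mem_symN : resort n ν z ∈ symN n := by
  rw [mem_symN]
  intro i hi
  exact Equiv.Perm.extendDomain_apply_not_subtype _ _ (by omega)

lemma resort_apply {i : ℕ} (h : i < n) :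
    resort n ν z i = ((Tuple.sort (sortKey n ν z)) ⟨i, h⟩ : Fin n) := by
  rw [resort, Equiv.Perm.extendDomain_apply_subtype (p := fun i => i < n) _ Fin.equivSubtype h]
  simp [Fin.equivSubtype]

lemma resort_inv_apply {a : ℕ} (h : a < n) :
    (resort n ν z)⁻¹ a = ((Tuple.sort (sortKey n ν z))⁻¹ ⟨a, h⟩ : Fin n) := by
  rw [resort, Equiv.Perm.extendDomain_inv,
    Equiv.Perm.extendDomain_apply_subtype (p := fun i => i < n) _ Fin.equivSubtype h]
  simp [Fin.equivSubtype]

/-- the sorted permutation hits each block with the right multiplicity -/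
lemma bIdx_sort (hν : isComposition n ν) (hz : z ∈ symN n) {r : ℕ} (hr : r < n) :
    bIdx ν (z ((Tuple.sort (sortKey n ν z)) ⟨r, hr⟩ : Fin n)) = bIdx ν r := by
  classical
  set π := Tuple.sort (sortKey n ν z) with hπ
  set f : ℕ → ℕ := fun r => if h : r < n then bIdx ν (z ((π ⟨r, h⟩ : Fin n) : ℕ)) else 0 with hfdef
  have hf : ∀ i j, i ≤ j → j < n → f i ≤ f j := by
    intro i j hij hj
    have hi : i < n := lt_of_le_of_lt hij hj
    rw [hfdef]
    simp only [dif_pos hi, dif_pos hj]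
    have hkey : sortKey n ν z (π ⟨i, hi⟩) ≤ sortKey n ν z (π ⟨j, hj⟩) :=
      sortKey_strictMono.monotone (show (⟨i, hi⟩ : Fin n) ≤ ⟨j, hj⟩ from hij)
    rw [sortKey, sortKey] at hkey
    rcases Prod.Lex.le_iff.mp hkey with h | ⟨h, _⟩
    · exact le_of_lt h
    · exact le_of_eq h
  have hg : ∀ i j, i ≤ j → j < n → bIdx ν i ≤ bIdx ν j :=
    fun i j hij hj => bIdx_le_of_le hν.1 (lt_of_le_of_lt hij hj) hj hij
  have hcard : ∀ v, ((range n).filter (fun i => f i = v)).card =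
      ((range n).filter (fun i => bIdx ν i = v)).card := by
    intro v
    have step1 : ((range n).filter (fun i => f i = v)).card =
        ((range n).filter (fun a => bIdx ν (z a) = v)).card := by
      apply Finset.card_bij (fun r hr => ((π ⟨r, mem_range.mp (mem_filter.mp hr).1⟩ : Fin n) : ℕ))
      · intro r hrm
        have hrr := mem_filter.mp hrm
        have hrn := mem_range.mp hrr.1
        rw [mem_filter, mem_range]
        refine ⟨(π ⟨r, hrn⟩ : Fin n).2, ?_⟩
        have := hrr.2
        rw [hfdef] at this
        simpa [dif_pos hrn] using this
      · intro r1 h1 r2 h2 he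
        have := π.injective (Fin.ext he)
        simpa using congrArg Fin.val this
      · intro a ham
        have haa := mem_filter.mp ham
        have han := mem_range.mp haa.1
        refine ⟨((π⁻¹ ⟨a, han⟩ : Fin n) : ℕ), ?_, ?_⟩
        · rw [mem_filter, mem_range]
          refine ⟨(π⁻¹ ⟨a, han⟩ : Fin n).2, ?_⟩
          rw [hfdef]
          simp only [dif_pos (π⁻¹ ⟨a, han⟩ : Fin n).2]
          have : π ⟨((π⁻¹ ⟨a, han⟩ : Fin n) : ℕ), (π⁻¹ ⟨a, han⟩ : Fin n).2⟩ = ⟨a, han⟩ := by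
            rw [show (⟨((π⁻¹ ⟨a, han⟩ : Fin n) : ℕ), (π⁻¹ ⟨a, han⟩ : Fin n).2⟩ : Fin n)
              = π⁻¹ ⟨a, han⟩ from Fin.ext rfl]
            exact π.apply_symm_apply _
          rw [this]
          exact haa.2
        · rw [show (⟨((π⁻¹ ⟨a, han⟩ : Fin n) : ℕ), (π⁻¹ ⟨a, han⟩ : Fin n).2⟩ : Fin n)
            = π⁻¹ ⟨a, han⟩ from Fin.ext rfl]
          rw [Equiv.Perm.coe_inv, Equiv.apply_symm_apply]
    have step2 : ((range n).filter (fun a => bIdx ν (z a) = v)).card =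
        ((range n).filter (fun i => bIdx ν i = v)).card := by
      apply Finset.card_bij (fun a _ => z a)
      · intro a ham
        have haa := mem_filter.mp ham
        rw [mem_filter, mem_range]
        exact ⟨symN_lt hz (mem_range.mp haa.1), haa.2⟩
      · intro a1 _ a2 _ he
        exact z.injective he
      · intro i him
        have hii := mem_filter.mp him
        refine ⟨z⁻¹ i, ?_, z.apply_symm_apply i⟩
        rw [mem_filter, mem_range]
        have hin : z⁻¹ i < n := symN_lt ((symN n).inv_mem hz) (mem_range.mp hii.1)
        refine ⟨hin, ?_⟩
        rw [Equiv.Perm.coe_inv, Equiv.apply_symm_apply]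
        exact hii.2
    rw [step1, step2]
  have := mono_eq_of_fibers hf hg hcard hr
  rw [hfdef] at this
  simpa [dif_pos hr] using this

lemma bIdx_resort_inv (hν : isComposition n ν) (hz : z ∈ symN n) {a : ℕ} (ha : a < n) :
    bIdx ν ((resort n ν z)⁻¹ a) = bIdx ν (z a) := by
  set π := Tuple.sort (sortKey n ν z) with hπ
  have h1 := bIdx_sort hν hz (r := ((π⁻¹ ⟨a, ha⟩ : Fin n) : ℕ)) (π⁻¹ ⟨a, ha⟩ : Fin n).2
  rw [resort_inv_apply ha]
  rw [show (⟨((π⁻¹ ⟨a, ha⟩ : Fin n) : ℕ), (π⁻¹ ⟨a, ha⟩ : Fin n).2⟩ : Fin n)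
    = π⁻¹ ⟨a, ha⟩ from Fin.ext rfl, Equiv.Perm.coe_inv, π.apply_symm_apply] at h1
  exact h1.symm

lemma resort_adjInc (hν : isComposition n ν) (hz : z ∈ symN n) :
    adjInc ν (resort n ν z) := by
  intro k hk
  obtain ⟨q, hkq, hk1q⟩ := hk
  have hk1 : k + 1 < n := mem_block_lt hν.1 hk1q
  have hkn : k < n := by omega
  set π := Tuple.sort (sortKey n ν z) with hπ
  rw [resort_apply hkn, resort_apply hk1]
  have hb1 : bIdx ν (z ((π ⟨k, hkn⟩ : Fin n) : ℕ)) = bIdx ν k := bIdx_sort hν hz hkn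
  have hb2 : bIdx ν (z ((π ⟨k + 1, hk1⟩ : Fin n) : ℕ)) = bIdx ν (k + 1) := bIdx_sort hν hz hk1
  have hbeq : bIdx ν k = bIdx ν (k + 1) := by rw [bIdx_eq hkq, bIdx_eq hk1q]
  have hkey : sortKey n ν z (π ⟨k, hkn⟩) < sortKey n ν z (π ⟨k + 1, hk1⟩) :=
    sortKey_strictMono (show (⟨k, hkn⟩ : Fin n) < ⟨k + 1, hk1⟩ from by
      rw [Fin.mk_lt_mk]; omega)
  rw [sortKey, sortKey] at hkey
  rcases Prod.Lex.lt_iff.mp hkey with h | ⟨_, h⟩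
  · exfalso
    simp only [ofLex_toLex] at h
    omega
  · simpa using h

/-! ### uniqueness: a block-increasing permutation is determined by block indices -/

lemma perm_eq_of_bIdx {n : ℕ} {ν : List ℕ} (hν : isComposition n ν) {u v : Equiv.Perm ℕ}
    (hu : u ∈ symN n) (hv : v ∈ symN n) (hiu : adjInc ν u) (hiv : adjInc ν v)
    (h : ∀ a, a < n → bIdx ν (u⁻¹ a) = bIdx ν (v⁻¹ a)) : u = v := by
  classical
  apply Equiv.ext
  intro i
  by_cases hi : i < n
  swap
  · push_neg at hi
    rw [hu i hi, hv i hi]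
  set q := bIdx ν i with hq
  have hiblk : i ∈ blockSet ν q := mem_block_bIdx' hν.1 hi
  set k := psum ν (q + 1) - psum ν q with hk
  set A := (range n).filter (fun a => bIdx ν (u⁻¹ a) = q) with hA
  have hple : psum ν q ≤ psum ν (q + 1) := psum_le_succ ν q
  have cardA : ∀ w : Equiv.Perm ℕ, w ∈ symN n →
      ((range n).filter (fun a => bIdx ν (w⁻¹ a) = q)).card = k := by
    intro w hw
    rw [show k = (Finset.Ico (psum ν q) (psum ν (q + 1))).card by
      rw [Nat.card_Ico]]
    apply Finset.card_bij (fun a _ => w⁻¹ a)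
    · intro a ham
      have haa := mem_filter.mp ham
      have han := mem_range.mp haa.1
      have hwn : w⁻¹ a < n := symN_lt ((symN n).inv_mem hw) han
      have := mem_block_bIdx' hν.1 hwn
      rw [haa.2] at this
      rw [Finset.mem_Ico]
      exact this
    · intro a1 _ a2 _ he
      exact w⁻¹.injective he
    · intro b hbm
      rw [Finset.mem_Ico] at hbm
      have hbblk : b ∈ blockSet ν q := hbm
      have hbn : b < n := mem_block_lt hν.1 hbblk
      refine ⟨w b, ?_, by rw [Equiv.Perm.coe_inv, Equiv.symm_apply_apply]⟩
      rw [mem_filter, mem_range]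
      refine ⟨symN_lt hw hbn, ?_⟩
      rw [Equiv.Perm.coe_inv, Equiv.symm_apply_apply]
      exact bIdx_eq hbblk
  have hAcard : A.card = k := cardA u hu
  have hblk_mem : ∀ r : Fin k, psum ν q + (r : ℕ) ∈ blockSet ν q := by
    intro r
    rw [mem_blockSet_iff]
    have := r.2
    omega
  have key : ∀ w : Equiv.Perm ℕ, w ∈ symN n → adjInc ν w →
      (∀ a, a < n → bIdx ν (w⁻¹ a) = bIdx ν (u⁻¹ a)) →
      (fun r : Fin k => w (psum ν q + (r : ℕ))) = fun r => A.orderEmbOfFin hAcard r := by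
    intro w hw hiw hww
    apply Finset.orderEmbOfFin_unique hAcard
    · intro r
      have hm := hblk_mem r
      have hn : psum ν q + (r : ℕ) < n := mem_block_lt hν.1 hm
      rw [hA, mem_filter, mem_range]
      have hwn : w (psum ν q + (r : ℕ)) < n := symN_lt hw hn
      refine ⟨hwn, ?_⟩
      rw [← hww _ hwn, Equiv.Perm.coe_inv, Equiv.symm_apply_apply]
      exact bIdx_eq hm
    · intro r1 r2 hlt
      exact incOn_of_adjInc hiw (hblk_mem r1) (hblk_mem r2) (by
        have : (r1 : ℕ) < (r2 : ℕ) := hlt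
        omega)
  have keyu := key u hu hiu (fun a ha => rfl)
  have keyv := key v hv hiv (fun a ha => (h a ha).symm)
  have hik : i - psum ν q < k := by
    rw [mem_blockSet_iff] at hiblk
    omega
  have hieq : psum ν q + ((⟨i - psum ν q, hik⟩ : Fin k) : ℕ) = i := by
    rw [mem_blockSet_iff] at hiblk
    simp
    omega
  calc u i = u (psum ν q + ((⟨i - psum ν q, hik⟩ : Fin k) : ℕ)) := by rw [hieq]
    _ = A.orderEmbOfFin hAcard ⟨i - psum ν q, hik⟩ := congrFun keyu _
    _ = v (psum ν q + ((⟨i - psum ν q, hik⟩ : Fin k) : ℕ)) := (congrFun keyv _).symm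
    _ = v i := by rw [hieq]

end S12

namespace S12
open Finset

noncomputable def XF (n : ℕ) (c : List ℕ) : Finset (Equiv.Perm ℕ) :=
  (minLeft_finite n (edgesOf c)).toFinset

lemma mem_XF {n : ℕ} {c : List ℕ} {x : Equiv.Perm ℕ} :
    x ∈ XF n c ↔ isMinLeft n (edgesOf c) x := Set.Finite.mem_toFinset _

open scoped Classical in
noncomputable def TF (n : ℕ) (ν μ : List ℕ) (σ : Equiv.Perm ℕ) : Finset (Equiv.Perm ℕ) :=
  (XF n ν).filter (fun x => isMinLeft n (edgesOf μ) (x⁻¹ * σ))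

lemma mem_TF {n : ℕ} {ν μ : List ℕ} {σ x : Equiv.Perm ℕ} :
    x ∈ TF n ν μ σ ↔ isMinLeft n (edgesOf ν) x ∧ isMinLeft n (edgesOf μ) (x⁻¹ * σ) := by
  classical
  rw [TF]
  rw [mem_filter, mem_XF]

lemma card_TF_le {n : ℕ} {ν μ : List ℕ} (hν : isComposition n ν) (hμ : isComposition n μ)
    {σ τ : Equiv.Perm ℕ} (hσ : σ ∈ symN n) (hτ : τ ∈ symN n)
    (hD : ∀ p, p < n → (σ (p + 1) < σ p ↔ τ (p + 1) < τ p)) :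
    (TF n ν μ σ).card ≤ (TF n ν μ τ).card := by
  classical
  have hfacts : ∀ x ∈ TF n ν μ σ, x ∈ symN n ∧ adjInc ν x ∧ x⁻¹ * σ ∈ symN n ∧
      adjInc μ (x⁻¹ * σ) ∧ x⁻¹ * σ * τ⁻¹ ∈ symN n := by
    intro x hx
    rw [mem_TF, isMinLeft_iff hν, isMinLeft_iff hμ] at hx
    exact ⟨hx.1.1, hx.1.2, hx.2.1, hx.2.2,
      (symN n).mul_mem hx.2.1 ((symN n).inv_mem hτ)⟩
  have hzval : ∀ (x : Equiv.Perm ℕ) (a : ℕ), (x⁻¹ * σ * τ⁻¹) (τ a) = x⁻¹ (σ a) := by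
    intro x a
    simp [Equiv.Perm.mul_apply]
  apply Finset.card_le_card_of_injOn (fun x => resort n ν (x⁻¹ * σ * τ⁻¹))
  · intro x hx
    obtain ⟨hx1, hx2, hx3, hx4, hz⟩ := hfacts x hx
    set z := x⁻¹ * σ * τ⁻¹ with hzdef
    set x' := resort n ν z with hx'def
    have hx'1 : x' ∈ symN n := resort_mem_symN
    have hx'2 : adjInc ν x' := resort_adjInc hν hz
    rw [Finset.mem_coe, mem_TF, isMinLeft_iff hν, isMinLeft_iff hμ]
    refine ⟨⟨hx'1, hx'2⟩, (symN n).mul_mem ((symN n).inv_mem hx'1) hτ, ?_⟩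
    -- adjInc μ (x'⁻¹ * τ)
    intro p hp
    obtain ⟨qp, hpq, hpq1⟩ := hp
    have hp1 : p + 1 < n := mem_block_lt hμ.1 hpq1
    have hpn : p < n := by omega
    set a := τ p with ha
    set b := τ (p + 1) with hb
    have han : a < n := symN_lt hτ hpn
    have hbn : b < n := symN_lt hτ hp1
    have hab : a ≠ b := fun e => by have := τ.injective e; omega
    set u := (x⁻¹ * σ) p with hu
    set u' := (x⁻¹ * σ) (p + 1) with hu'
    have huu : u < u' := hx4 p ⟨qp, hpq, hpq1⟩
    have hun : u < n := symN_lt hx3 hpn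
    have hu'n : u' < n := symN_lt hx3 hp1
    have hza : z a = u := hzval x p
    have hzb : z b = u' := hzval x (p + 1)
    have hP5a : bIdx ν (x'⁻¹ a) = bIdx ν u := by
      rw [hx'def, bIdx_resort_inv hν hz han, hza]
    have hP5b : bIdx ν (x'⁻¹ b) = bIdx ν u' := by
      rw [hx'def, bIdx_resort_inv hν hz hbn, hzb]
    have hinvan : x'⁻¹ a < n := symN_lt ((symN n).inv_mem hx'1) han
    have hinvbn : x'⁻¹ b < n := symN_lt ((symN n).inv_mem hx'1) hbn
    show x'⁻¹ (τ p) < x'⁻¹ (τ (p + 1))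
    have hble : bIdx ν u ≤ bIdx ν u' := bIdx_le_of_le hν.1 hun hu'n (le_of_lt huu)
    rcases lt_or_eq_of_le hble with hblt | hbeq
    · -- different blocks
      have m1 : x'⁻¹ a ∈ blockSet ν (bIdx ν u) := by
        rw [← hP5a]; exact mem_block_bIdx' hν.1 hinvan
      have m2 : x'⁻¹ b ∈ blockSet ν (bIdx ν u') := by
        rw [← hP5b]; exact mem_block_bIdx' hν.1 hinvbn
      exact block_lt_block hblt m1 m2
    · -- same block
      have hmu : u ∈ blockSet ν (bIdx ν u) := mem_block_bIdx' hν.1 hun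
      have hmu' : u' ∈ blockSet ν (bIdx ν u) := by
        rw [hbeq]; exact mem_block_bIdx' hν.1 hu'n
      have hxu : x u < x u' := incOn_of_adjInc hx2 hmu hmu' huu
      have hxuval : x u = σ p := by
        rw [hu]; simp [Equiv.Perm.mul_apply]
      have hxu'val : x u' = σ (p + 1) := by
        rw [hu']; simp [Equiv.Perm.mul_apply]
      have hσlt : σ p < σ (p + 1) := by rw [← hxuval, ← hxu'val]; exact hxu
      have hτlt : a < b := by
        have := (hD p hpn).not
        rw [ha, hb]
        have h1 : ¬ τ (p + 1) < τ p := by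
          apply (hD p hpn).not.mp
          omega
        have h2 : τ p ≠ τ (p + 1) := fun e => by have := τ.injective e; omega
        omega
      by_contra hcon
      push_neg at hcon
      have hne : x'⁻¹ b ≠ x'⁻¹ a := fun e => hab (x'⁻¹.injective e).symm
      have hlt : x'⁻¹ b < x'⁻¹ a := lt_of_le_of_ne hcon hne
      have m1 : x'⁻¹ a ∈ blockSet ν (bIdx ν u) := by
        rw [← hP5a]; exact mem_block_bIdx' hν.1 hinvan
      have m2 : x'⁻¹ b ∈ blockSet ν (bIdx ν u) := by
        rw [hbeq, ← hP5b]; exact mem_block_bIdx' hν.1 hinvbn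
      have := incOn_of_adjInc hx'2 m2 m1 hlt
      rw [Equiv.Perm.coe_inv, x'.apply_symm_apply, x'.apply_symm_apply] at this
      omega
  · intro x1 hx1m x2 hx2m he
    simp only [Finset.mem_coe] at hx1m hx2m
    obtain ⟨h11, h12, h13, h14, hz1⟩ := hfacts x1 hx1m
    obtain ⟨h21, h22, h23, h24, hz2⟩ := hfacts x2 hx2m
    apply perm_eq_of_bIdx hν h11 h21 h12 h22
    intro bb hbb
    have hsb : σ⁻¹ bb < n := symN_lt ((symN n).inv_mem hσ) hbb
    set aa := τ (σ⁻¹ bb) with haa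
    have haan : aa < n := symN_lt hτ hsb
    have e1 : bIdx ν ((resort n ν (x1⁻¹ * σ * τ⁻¹))⁻¹ aa) = bIdx ν ((x1⁻¹ * σ * τ⁻¹) aa) :=
      bIdx_resort_inv hν hz1 haan
    have e2 : bIdx ν ((resort n ν (x2⁻¹ * σ * τ⁻¹))⁻¹ aa) = bIdx ν ((x2⁻¹ * σ * τ⁻¹) aa) :=
      bIdx_resort_inv hν hz2 haan
    have hval1 : (x1⁻¹ * σ * τ⁻¹) aa = x1⁻¹ bb := by
      rw [haa]; simp [Equiv.Perm.mul_apply]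
    have hval2 : (x2⁻¹ * σ * τ⁻¹) aa = x2⁻¹ bb := by
      rw [haa]; simp [Equiv.Perm.mul_apply]
    rw [hval1] at e1
    rw [hval2] at e2
    rw [← e1, ← e2]
    simp only at he
    rw [he]

lemma card_TF_eq {n : ℕ} {ν μ : List ℕ} (hν : isComposition n ν) (hμ : isComposition n μ)
    {σ τ : Equiv.Perm ℕ} (hσ : σ ∈ symN n) (hτ : τ ∈ symN n)
    (hD : ∀ p, p < n → (σ (p + 1) < σ p ↔ τ (p + 1) < τ p)) :
    (TF n ν μ σ).card = (TF n ν μ τ).card :=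
  le_antisymm (card_TF_le hν hμ hσ hτ hD)
    (card_TF_le hν hμ hτ hσ (fun p hp => (hD p hp).symm))

end S12

namespace S12
open Finset

/-! ### compositions from subsets -/

lemma psum_zero (c : List ℕ) : psum c 0 = 0 := rfl

lemma psum_cons (a : ℕ) (t : List ℕ) (q : ℕ) : psum (a :: t) (q + 1) = a + psum t q := by
  simp [psum, List.take_succ_cons]

lemma edgesOf_nil : edgesOf [] = ∅ := by
  ext i
  simp [edgesOf, blockSet]

lemma blockSet_cons_zero (a : ℕ) (t : List ℕ) : blockSet (a :: t) 0 = Set.Ico 0 a := by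
  simp [blockSet]

lemma blockSet_cons_succ (a : ℕ) (t : List ℕ) (q : ℕ) :
    blockSet (a :: t) (q + 1) = Set.Ico (a + psum t q) (a + psum t (q + 1)) := by
  have h1 : psum (a :: t) (q + 1) = a + psum t q := psum_cons a t q
  have h2 : psum (a :: t) (q + 2) = a + psum t (q + 1) := psum_cons a t (q + 1)
  rw [blockSet]
  rw [show ((a :: t).take (q + 1)).sum = psum (a :: t) (q + 1) from rfl,
    show ((a :: t).take (q + 2)).sum = psum (a :: t) (q + 2) from rfl, h1, h2]

lemma edgesOf_cons (a : ℕ) (t : List ℕ) :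
    edgesOf (a :: t) = {i | i + 1 < a} ∪ (fun j => a + j) '' edgesOf t := by
  ext i
  simp only [edgesOf, Set.mem_setOf_eq, Set.mem_union, Set.mem_image]
  constructor
  · rintro ⟨q, h1, h2⟩
    cases q with
    | zero =>
      left
      rw [blockSet_cons_zero] at h1 h2
      exact h2.2
    | succ q =>
      right
      rw [blockSet_cons_succ] at h1 h2
      have hia : a ≤ i := le_trans (Nat.le_add_right a (psum t q)) h1.1
      refine ⟨i - a, ⟨q, ?_, ?_⟩, ?_⟩
      · rw [mem_blockSet_iff]
        have := h1.1; have := h1.2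
        constructor <;> omega
      · rw [mem_blockSet_iff]
        have := h2.1; have := h2.2
        constructor <;> omega
      · omega
  · rintro (h | ⟨j, ⟨q, hj1, hj2⟩, rfl⟩)
    · refine ⟨0, ?_, ?_⟩ <;> rw [blockSet_cons_zero] <;> exact ⟨by omega, by omega⟩
    · rw [mem_blockSet_iff] at hj1 hj2
      refine ⟨q + 1, ?_, ?_⟩ <;> rw [blockSet_cons_succ, Set.mem_Ico] <;>
        exact ⟨by omega, by omega⟩

lemma exists_comp : ∀ (n : ℕ) (S : Finset ℕ), (∀ s ∈ S, s + 1 < n) →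
    ∃ ν : List ℕ, ν.sum = n ∧ (∀ k ∈ ν, 0 < k) ∧
      edgesOf ν = {i | i + 1 < n ∧ i ∉ S} := by
  intro n
  induction n using Nat.strong_induction_on with
  | _ n ih =>
    intro S hS
    rcases Nat.eq_zero_or_pos n with rfl | hn
    · refine ⟨[], rfl, by simp, ?_⟩
      rw [edgesOf_nil]
      ext i
      simp
    rcases S.eq_empty_or_nonempty with rfl | hSne
    · refine ⟨[n], by simp, ?_, ?_⟩
      · intro k hk
        simp only [List.mem_singleton] at hk
        omega
      · rw [edgesOf_cons, edgesOf_nil]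
        ext i
        simp
    · set m := S.min' hSne + 1 with hm
      have hmin : S.min' hSne ∈ S := S.min'_mem hSne
      have hmn : m < n := by have := hS _ hmin; omega
      have hm1 : 1 ≤ m := by omega
      set S' := (S.erase (m - 1)).image (· - m) with hS'
      have hges : ∀ s ∈ S.erase (m - 1), m ≤ s := by
        intro s hs
        rw [mem_erase] at hs
        have := S.min'_le s hs.2
        have := hs.1
        omega
      have hS'cond : ∀ s' ∈ S', s' + 1 < n - m := by
        intro s' hs'
        rw [hS', mem_image] at hs'
        obtain ⟨s, hs, rfl⟩ := hs'
        have h1 := hges s hs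
        have h2 := hS s (mem_erase.mp hs).2
        omega
      obtain ⟨ν', hsum', hpos', hedge'⟩ := ih (n - m) (by omega) S' hS'cond
      refine ⟨m :: ν', by rw [List.sum_cons, hsum']; omega, ?_, ?_⟩
      · intro k hk
        rcases List.mem_cons.mp hk with rfl | hk
        · omega
        · exact hpos' k hk
      · rw [edgesOf_cons, hedge']
        ext i
        simp only [Set.mem_union, Set.mem_setOf_eq, Set.mem_image]
        constructor
        · rintro (h | ⟨j, ⟨hj1, hj2⟩, rfl⟩)
          · refine ⟨by omega, fun hiS => ?_⟩
            have := S.min'_le i hiS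
            omega
          · refine ⟨by omega, fun hiS => hj2 ?_⟩
            rw [hS', mem_image]
            exact ⟨m + j, mem_erase.mpr ⟨by omega, hiS⟩, by omega⟩
        · rintro ⟨hin, hiS⟩
          by_cases him : i + 1 < m
          · exact Or.inl him
          · have hne : i ≠ m - 1 := by
              intro e
              have hmm : m - 1 = S.min' hSne := by omega
              exact hiS (by rw [e, hmm]; exact hmin)
            have him' : m ≤ i := by omega
            refine Or.inr ⟨i - m, ⟨by omega, fun hmem => ?_⟩, by omega⟩
            rw [hS', mem_image] at hmem
            obtain ⟨s, hs, hsub⟩ := hmem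
            have h1 := hges s hs
            have hsi : s = i := by omega
            exact hiS (hsi ▸ (mem_erase.mp hs).2)

/-! ### descent sets -/

def Dess (n : ℕ) (σ : Equiv.Perm ℕ) : Finset ℕ :=
  (range n).filter (fun k => σ (k + 1) < σ k)

lemma Dess_subset {n : ℕ} {σ : Equiv.Perm ℕ} (hσ : σ ∈ symN n) :
    Dess n σ ⊆ range (n - 1) := by
  intro k hk
  rw [Dess, mem_filter, mem_range] at hk
  obtain ⟨hkn, hklt⟩ := hk
  rw [mem_range]
  rcases Nat.lt_or_ge k (n - 1) with h | h
  · exact h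
  · exfalso
    have hk1 : k + 1 = n := by omega
    have e1 : σ (k + 1) = k + 1 := hσ (k + 1) (by omega)
    have e2 : σ k < n := symN_lt hσ hkn
    omega

lemma B_eq (n : ℕ) (c : List ℕ) :
    B n c = ∑ x ∈ XF n c, MonoidAlgebra.single x (1 : ℤ) :=
  finsum_mem_eq_finite_toFinset_sum _ (minLeft_finite n (edgesOf c))

/-! ### span membership of descent-class sums -/

lemma C_mem (n : ℕ) (S : Finset ℕ) (hS : S ⊆ range (n - 1)) :
    (∑ σ ∈ (symN_finite n).toFinset.filter (fun σ => Dess n σ ⊆ S),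
      MonoidAlgebra.single σ (1 : ℤ)) ∈
      Submodule.span ℤ {p | ∃ ν : List ℕ, isComposition n ν ∧ p = B n ν} := by
  obtain ⟨ν, hsum, hpos, hedge⟩ := exists_comp n S (fun s hs => by
    have := mem_range.mp (hS hs); omega)
  have hν : isComposition n ν := ⟨hsum, hpos⟩
  have hXF : XF n ν = (symN_finite n).toFinset.filter (fun σ => Dess n σ ⊆ S) := by
    ext σ
    rw [mem_XF, isMinLeft_iff hν, mem_filter, Set.Finite.mem_toFinset]
    constructor
    · rintro ⟨h1, h2⟩
      refine ⟨h1, ?_⟩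
      intro k hk
      rw [Dess, mem_filter, mem_range] at hk
      obtain ⟨hkn, hklt⟩ := hk
      have hkn1 : k + 1 < n := by
        rcases Nat.lt_or_ge (k + 1) n with h | h
        · exact h
        · exfalso
          have e1 : σ (k + 1) = k + 1 := h1 (k + 1) (by omega)
          have e2 : σ k < n := symN_lt h1 hkn
          omega
      by_contra hkS
      have hke : k ∈ edgesOf ν := by rw [hedge]; exact ⟨hkn1, hkS⟩
      have := h2 k hke
      omega
    · rintro ⟨h1, h2⟩
      refine ⟨h1, ?_⟩
      intro k hk
      rw [hedge] at hk
      obtain ⟨hk1, hkS⟩ := hk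
      have hnd : k ∉ Dess n σ := fun hd => hkS (h2 hd)
      rw [Dess, mem_filter, mem_range] at hnd
      push_neg at hnd
      have := hnd (by omega)
      have hne : σ k ≠ σ (k + 1) := fun e => by have := σ.injective e; omega
      omega
  rw [← hXF, ← B_eq]
  exact Submodule.subset_span ⟨ν, hν, rfl⟩

lemma D_mem (n : ℕ) : ∀ (k : ℕ) (S : Finset ℕ), S ⊆ range (n - 1) → S.card ≤ k →
    (∑ σ ∈ (symN_finite n).toFinset.filter (fun σ => Dess n σ = S),
      MonoidAlgebra.single σ (1 : ℤ)) ∈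
      Submodule.span ℤ {p | ∃ ν : List ℕ, isComposition n ν ∧ p = B n ν} := by
  have hCD : ∀ S : Finset ℕ,
      (∑ σ ∈ (symN_finite n).toFinset.filter (fun σ => Dess n σ ⊆ S),
        MonoidAlgebra.single σ (1 : ℤ)) =
      ∑ T ∈ S.powerset, ∑ σ ∈ (symN_finite n).toFinset.filter (fun σ => Dess n σ = T),
        MonoidAlgebra.single σ (1 : ℤ) := by
    intro S
    have maps : ∀ σ ∈ (symN_finite n).toFinset.filter (fun σ => Dess n σ ⊆ S),
        Dess n σ ∈ S.powerset := fun σ h => mem_powerset.mpr (mem_filter.mp h).2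
    rw [← Finset.sum_fiberwise_of_maps_to maps (fun σ => MonoidAlgebra.single σ (1 : ℤ))]
    apply Finset.sum_congr rfl
    intro T hT
    apply Finset.sum_congr _ (fun _ _ => rfl)
    rw [Finset.filter_filter]
    apply Finset.filter_congr
    intro σ _
    constructor
    · rintro ⟨_, h⟩; exact h
    · intro h; exact ⟨h ▸ mem_powerset.mp hT, h⟩
  intro k
  induction k with
  | zero =>
    intro S hS hcard
    have h0 : S = ∅ := card_eq_zero.mp (Nat.le_zero.mp hcard)
    subst h0
    have := hCD ∅
    rw [Finset.powerset_empty, Finset.sum_singleton] at this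
    rw [← this]
    exact C_mem n ∅ (empty_subset _)
  | succ k ihk =>
    intro S hS hcard
    have hsplit := Finset.add_sum_erase S.powerset
      (fun T => ∑ σ ∈ (symN_finite n).toFinset.filter (fun σ => Dess n σ = T),
        MonoidAlgebra.single σ (1 : ℤ)) (mem_powerset_self S)
    have heq : (∑ σ ∈ (symN_finite n).toFinset.filter (fun σ => Dess n σ = S),
        MonoidAlgebra.single σ (1 : ℤ)) =
        (∑ σ ∈ (symN_finite n).toFinset.filter (fun σ => Dess n σ ⊆ S),
          MonoidAlgebra.single σ (1 : ℤ)) -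
        ∑ T ∈ S.powerset.erase S, ∑ σ ∈ (symN_finite n).toFinset.filter
          (fun σ => Dess n σ = T), MonoidAlgebra.single σ (1 : ℤ) := by
      rw [hCD S, ← hsplit]
      abel
    rw [heq]
    apply Submodule.sub_mem
    · exact C_mem n S hS
    · apply Submodule.sum_mem
      intro T hT
      rw [mem_erase, mem_powerset] at hT
      have hTS : T ⊂ S := ssubset_of_ne_of_subset hT.1 hT.2
      exact ihk T (hT.2.trans hS) (by have := Finset.card_lt_card hTS; omega)

/-! ### the product of two basis elements -/

open scoped Classical in
lemma fiber_card {n : ℕ} {ν μ : List ℕ} (σ : Equiv.Perm ℕ) :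
    (((XF n ν) ×ˢ (XF n μ)).filter
      (fun p : Equiv.Perm ℕ × Equiv.Perm ℕ => p.1 * p.2 = σ)).card =
      (TF n ν μ σ).card := by
  classical
  apply Finset.card_bij (fun p _ => p.1)
  · intro p hp
    have h := mem_filter.mp hp
    have hpr := mem_product.mp h.1
    rw [mem_TF]
    refine ⟨mem_XF.mp hpr.1, ?_⟩
    have he : p.1⁻¹ * σ = p.2 := by rw [← h.2, inv_mul_cancel_left]
    rw [he]
    exact mem_XF.mp hpr.2
  · intro p1 hp1 p2 hp2 he
    have h1 := (mem_filter.mp hp1).2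
    have h2 := (mem_filter.mp hp2).2
    apply Prod.ext he
    have h3 : p1.1 * p1.2 = p2.1 * p2.2 := by rw [h1, h2]
    rw [he] at h3
    exact mul_left_cancel h3
  · intro x hx
    rw [mem_TF] at hx
    refine ⟨(x, x⁻¹ * σ), ?_, rfl⟩
    rw [mem_filter, mem_product]
    exact ⟨⟨mem_XF.mpr hx.1, mem_XF.mpr hx.2⟩, by rw [mul_inv_cancel_left]⟩

lemma mulB {n : ℕ} {ν μ : List ℕ} (hν : isComposition n ν) (hμ : isComposition n μ) :
    B n ν * B n μ ∈
      Submodule.span ℤ {p | ∃ c : List ℕ, isComposition n c ∧ p = B n c} := by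
  classical
  rw [B_eq, B_eq, Finset.sum_mul_sum]
  simp only [MonoidAlgebra.single_mul_single, one_mul]
  rw [← Finset.sum_product']
  have maps : ∀ p ∈ (XF n ν) ×ˢ (XF n μ), p.1 * p.2 ∈ (symN_finite n).toFinset := by
    intro p hp
    rw [Set.Finite.mem_toFinset]
    rw [mem_product] at hp
    exact (symN n).mul_mem (mem_XF.mp hp.1).1 (mem_XF.mp hp.2).1
  rw [← Finset.sum_fiberwise_of_maps_to maps
    (fun p : Equiv.Perm ℕ × Equiv.Perm ℕ => MonoidAlgebra.single (p.1 * p.2) (1 : ℤ))]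
  have step : ∀ σ ∈ (symN_finite n).toFinset,
      (∑ p ∈ ((XF n ν) ×ˢ (XF n μ)).filter (fun p => p.1 * p.2 = σ),
        MonoidAlgebra.single (p.1 * p.2) (1 : ℤ)) =
      (TF n ν μ σ).card • MonoidAlgebra.single σ (1 : ℤ) := by
    intro σ _
    rw [Finset.sum_congr rfl (fun p hp => by rw [(mem_filter.mp hp).2]),
      Finset.sum_const]
    rw [fiber_card]
  rw [Finset.sum_congr rfl step]
  have maps2 : ∀ σ ∈ (symN_finite n).toFinset, Dess n σ ∈ (range (n - 1)).powerset :=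
    fun σ hσ => mem_powerset.mpr (Dess_subset ((Set.Finite.mem_toFinset _).mp hσ))
  rw [← Finset.sum_fiberwise_of_maps_to maps2
    (fun σ => (TF n ν μ σ).card • MonoidAlgebra.single σ (1 : ℤ))]
  apply Submodule.sum_mem
  intro S hS
  rcases Finset.eq_empty_or_nonempty
    ((symN_finite n).toFinset.filter (fun σ => Dess n σ = S)) with he | ⟨σ0, hσ0⟩
  · rw [he, Finset.sum_empty]
    exact Submodule.zero_mem _
  · have hσ0f := mem_filter.mp hσ0
    have hσ0sym : σ0 ∈ symN n := (Set.Finite.mem_toFinset _).mp hσ0f.1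
    have hconst : ∀ σ ∈ (symN_finite n).toFinset.filter (fun σ => Dess n σ = S),
        (TF n ν μ σ).card = (TF n ν μ σ0).card := by
      intro σ hσm
      have hσf := mem_filter.mp hσm
      have hσsym : σ ∈ symN n := (Set.Finite.mem_toFinset _).mp hσf.1
      apply card_TF_eq hν hμ hσsym hσ0sym
      intro p hp
      have hiff : p ∈ Dess n σ ↔ p ∈ Dess n σ0 := by rw [hσf.2, hσ0f.2]
      simp only [Dess, mem_filter, mem_range] at hiff
      constructor
      · intro h; exact (hiff.mp ⟨hp, h⟩).2
      · intro h; exact (hiff.mpr ⟨hp, h⟩).2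
    rw [Finset.sum_congr rfl (fun σ hσm => by rw [hconst σ hσm])]
    rw [← Finset.smul_sum]
    rw [← Nat.cast_smul_eq_nsmul ℤ]
    exact Submodule.smul_mem _ _ (D_mem n S.card S (mem_powerset.mp hS) le_rfl)

end S12


/-- the ℤ-span of the elements `B_ν`, for `ν` a composition of
`n`, is closed under multiplication in `ℤ[Sₙ]`: it is the descent algebra. -/
theorem stmt12 (n : ℕ) (a b : MonoidAlgebra ℤ (Equiv.Perm ℕ))
    (ha : a ∈ Submodule.span ℤ {p | ∃ ν : List ℕ, isComposition n ν ∧ p = B n ν})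
    (hb : b ∈ Submodule.span ℤ {p | ∃ ν : List ℕ, isComposition n ν ∧ p = B n ν}) :
    a * b ∈ Submodule.span ℤ {p | ∃ ν : List ℕ, isComposition n ν ∧ p = B n ν} := by
  induction ha using Submodule.span_induction with
  | mem x hx =>
    obtain ⟨ν, hν, rfl⟩ := hx
    induction hb using Submodule.span_induction with
    | mem y hy =>
      obtain ⟨μ, hμ, rfl⟩ := hy
      exact S12.mulB hν hμ
    | zero => rw [mul_zero]; exact Submodule.zero_mem _
    | add y z _ _ ihy ihz => rw [mul_add]; exact Submodule.add_mem _ ihy ihz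
    | smul r y _ ihy => rw [mul_smul_comm]; exact Submodule.smul_mem _ _ ihy
  | zero => rw [zero_mul]; exact Submodule.zero_mem _
  | add y z _ _ ihy ihz => rw [add_mul]; exact Submodule.add_mem _ ihy ihz
  | smul r y _ ihy => rw [smul_mul_assoc]; exact Submodule.smul_mem _ _ ihy
end
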